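/- Let G be a group of homeomorphisms of a topological space X. The action of G on X is locally minimal if and only if X decomposes as a disjoint union of clopen G-invariant subsets W_i such that the action of G on each W_i is minimal. -/

import Mathlib

open Filter Topology Set

variable {X : Type*} [TopologicalSpace X]

/-- The group structure on self-homeomorphisms of `X`, with `(f * g) x = f (g x)`. -/
instance Homeomorph.instGroupSelf : Group (X ≃ₜ X) where
  mul f g := g.trans f
  one := Homeomorph.refl X
  inv := Homeomorph.symm
  mul_assoc _ _ _ := rfl
  one_mul _ := Homeomorph.ext fun _ => rfl
  mul_one _ := Homeomorph.ext fun _ => rfl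
  inv_mul_cancel f := Homeomorph.ext fun x => f.symm_apply_apply x

/-- The orbit of `x` under a group `G` of homeomorphisms of `X`. -/
def orbitSet (G : Subgroup (X ≃ₜ X)) (x : X) : Set X := {z | ∃ g ∈ G, g x = z}

/-- The action of `G` on `X` is minimal: every orbit is dense. -/
def IsMinimalAction (G : Subgroup (X ≃ₜ X)) : Prop := ∀ x : X, Dense (orbitSet G x)

/-- A set `S` of homeomorphisms acts minimally on `U`: for every `y ∈ U`, the intersection of
the `S`-orbit of `y` with `U` is dense in `U`. -/
def MinimalOn (S : Set (X ≃ₜ X)) (U : Set X) : Prop :=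
  ∀ y ∈ U, U ⊆ closure ({z | ∃ g ∈ S, g y = z} ∩ U)

/-- A set `S` of homeomorphisms acts locally minimally on `U`: every point of `U` has an open
neighbourhood `W ⊆ U` in which the intersection of every `S`-orbit with `W` is dense. -/
def LocallyMinimalOn (S : Set (X ≃ₜ X)) (U : Set X) : Prop :=
  ∀ x ∈ U, ∃ W ⊆ U, IsOpen W ∧ x ∈ W ∧ MinimalOn S W

/-- The rigid stabiliser of `U` in `G`: elements of `G` fixing `X \ U` pointwise. -/
def rist (G : Subgroup (X ≃ₜ X)) (U : Set X) : Set (X ≃ₜ X) :=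
  {g | g ∈ G ∧ ∀ z ∉ U, g z = z}

/-- The neighbourhood stabiliser of `x` in `G`, as a set: elements of `G` fixing pointwise
some open neighbourhood of `x`. -/
def nbhdStab (G : Subgroup (X ≃ₜ X)) (x : X) : Set (X ≃ₜ X) :=
  {g | g ∈ G ∧ ∃ U : Set X, IsOpen U ∧ x ∈ U ∧ ∀ z ∈ U, g z = z}

/-- The stabiliser of `x` in `G`, as a subgroup of the homeomorphism group. -/
def stabSub (G : Subgroup (X ≃ₜ X)) (x : X) : Subgroup (X ≃ₜ X) where
  carrier := {g | g ∈ G ∧ g x = x}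
  one_mem' := ⟨G.one_mem, rfl⟩
  mul_mem' := by
    rintro a b ⟨haG, ha⟩ ⟨hbG, hb⟩
    exact ⟨G.mul_mem haG hbG, by show a (b x) = x; rw [hb, ha]⟩
  inv_mem' := by
    rintro a ⟨haG, ha⟩
    refine ⟨G.inv_mem haG, ?_⟩
    show a.symm x = x
    conv_lhs => rw [← ha]
    exact a.symm_apply_apply x

/-- The neighbourhood stabiliser of `x` in `G`, as a subgroup of the homeomorphism group. -/
def nbhdStabSub (G : Subgroup (X ≃ₜ X)) (x : X) : Subgroup (X ≃ₜ X) where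
  carrier := nbhdStab G x
  one_mem' := ⟨G.one_mem, Set.univ, isOpen_univ, trivial, fun _ _ => rfl⟩
  mul_mem' := by
    rintro a b ⟨haG, U, hU, hxU, ha⟩ ⟨hbG, V, hV, hxV, hb⟩
    refine ⟨G.mul_mem haG hbG, U ∩ V, hU.inter hV, ⟨hxU, hxV⟩, fun z hz => ?_⟩
    show a (b z) = z
    rw [hb z hz.2, ha z hz.1]
  inv_mem' := by
    rintro a ⟨haG, U, hU, hxU, ha⟩
    refine ⟨G.inv_mem haG, U, hU, hxU, fun z hz => ?_⟩
    show a.symm z = z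
    conv_lhs => rw [← ha z hz]
    exact a.symm_apply_apply z

lemma mem_orbitSet_self (G : Subgroup (X ≃ₜ X)) (x : X) : x ∈ orbitSet G x :=
  ⟨1, G.one_mem, rfl⟩

lemma orbitSet_image {G : Subgroup (X ≃ₜ X)} {g : X ≃ₜ X} (hg : g ∈ G) (x : X) :
    ⇑g '' orbitSet G x = orbitSet G x := by
  ext z
  constructor
  · rintro ⟨w, ⟨h, hh, rfl⟩, rfl⟩
    exact ⟨g * h, G.mul_mem hg hh, rfl⟩
  · rintro ⟨h, hh, rfl⟩
    exact ⟨g.symm (h x), ⟨g⁻¹ * h, G.mul_mem (G.inv_mem hg) hh, rfl⟩,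
      g.apply_symm_apply _⟩

lemma closure_orbitSet_image {G : Subgroup (X ≃ₜ X)} {g : X ≃ₜ X} (hg : g ∈ G) (x : X) :
    ⇑g '' closure (orbitSet G x) = closure (orbitSet G x) := by
  rw [g.image_closure, orbitSet_image hg]

lemma orbitSet_eq_of_mem {G : Subgroup (X ≃ₜ X)} {x z : X} (h : z ∈ orbitSet G x) :
    orbitSet G z = orbitSet G x := by
  obtain ⟨h0, hh0, rfl⟩ := h
  ext w
  constructor
  · rintro ⟨g, hg, rfl⟩
    exact ⟨g * h0, G.mul_mem hg hh0, rfl⟩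
  · rintro ⟨g, hg, rfl⟩
    refine ⟨g * h0⁻¹, G.mul_mem hg (G.inv_mem hh0), ?_⟩
    show g (h0.symm (h0 x)) = g x
    rw [h0.symm_apply_apply]

lemma orbitSet_subset_closure {G : Subgroup (X ≃ₜ X)} {x y : X}
    (hy : y ∈ closure (orbitSet G x)) : orbitSet G y ⊆ closure (orbitSet G x) := by
  rintro _ ⟨g, hg, rfl⟩
  rw [← closure_orbitSet_image hg x]
  exact Set.mem_image_of_mem _ hy

lemma minimalOn_orbit {G : Subgroup (X ≃ₜ X)} {W : Set X} (h : MinimalOn (G : Set (X ≃ₜ X)) W)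
    {y : X} (hy : y ∈ W) : W ⊆ closure (orbitSet G y ∩ W) := by
  have := h y hy
  convert this using 3
  ext z; simp [orbitSet]

lemma isOpen_closure_orbitSet {G : Subgroup (X ≃ₜ X)}
    (H : LocallyMinimalOn (G : Set (X ≃ₜ X)) Set.univ) (x : X) :
    IsOpen (closure (orbitSet G x)) := by
  rw [isOpen_iff_mem_nhds]
  intro y hy
  obtain ⟨W, -, hWopen, hyW, hmin⟩ := H y trivial
  obtain ⟨z, hzW, hzx⟩ := mem_closure_iff.mp hy W hWopen hyW
  have h1 : W ⊆ closure (orbitSet G x) := by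
    refine (minimalOn_orbit hmin hzW).trans ?_
    refine closure_minimal ?_ isClosed_closure
    refine Set.inter_subset_left.trans ?_
    rw [orbitSet_eq_of_mem hzx]
    exact subset_closure
  exact Filter.mem_of_superset (hWopen.mem_nhds hyW) h1

lemma mem_closure_orbitSet_symm {G : Subgroup (X ≃ₜ X)}
    (H : LocallyMinimalOn (G : Set (X ≃ₜ X)) Set.univ) {x y : X}
    (h : y ∈ closure (orbitSet G x)) : x ∈ closure (orbitSet G y) := by
  have hopen := isOpen_closure_orbitSet H y
  obtain ⟨z, hzy, hzx⟩ := mem_closure_iff.mp h _ hopen (subset_closure (mem_orbitSet_self G y))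
  obtain ⟨g, hg, rfl⟩ := hzx
  have : g.symm (g x) ∈ ⇑g.symm '' closure (orbitSet G y) := Set.mem_image_of_mem _ hzy
  rwa [g.symm_apply_apply, show ⇑g.symm = ⇑(g⁻¹ : X ≃ₜ X) from rfl, closure_orbitSet_image (G.inv_mem hg)] at this

lemma closure_orbitSet_eq {G : Subgroup (X ≃ₜ X)}
    (H : LocallyMinimalOn (G : Set (X ≃ₜ X)) Set.univ) {x y : X}
    (h : y ∈ closure (orbitSet G x)) :
    closure (orbitSet G y) = closure (orbitSet G x) := by
  apply subset_antisymm
  · exact closure_minimal (orbitSet_subset_closure h) isClosed_closure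
  · exact closure_minimal (orbitSet_subset_closure (mem_closure_orbitSet_symm H h))
      isClosed_closure

theorem locallyMinimal_iff_clopen_decomposition (G : Subgroup (X ≃ₜ X)) :
    LocallyMinimalOn (G : Set (X ≃ₜ X)) Set.univ ↔
      ∃ 𝒲 : Set (Set X), (∀ W ∈ 𝒲, IsClopen W) ∧ 𝒲.PairwiseDisjoint id ∧
        ⋃₀ 𝒲 = Set.univ ∧
        ∀ W ∈ 𝒲, (∀ g ∈ G, ⇑g '' W = W) ∧ MinimalOn (G : Set (X ≃ₜ X)) W := by
  constructor
  · intro H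
    refine ⟨Set.range (fun x => closure (orbitSet G x)), ?_, ?_, ?_, ?_⟩
    · rintro W ⟨x, rfl⟩
      exact ⟨isClosed_closure, isOpen_closure_orbitSet H x⟩
    · rintro W ⟨x, rfl⟩ V ⟨y, rfl⟩ hne
      simp only [Function.onFun, id_eq]
      rw [Set.disjoint_left]
      intro p hpx hpy
      exact hne (by simp only [← closure_orbitSet_eq H hpx, ← closure_orbitSet_eq H hpy])
    · refine Set.eq_univ_of_forall fun x => ?_
      exact ⟨closure (orbitSet G x), ⟨x, rfl⟩, subset_closure (mem_orbitSet_self G x)⟩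
    · rintro W ⟨x, rfl⟩
      refine ⟨fun g hg => closure_orbitSet_image hg x, ?_⟩
      intro y hy
      have hW : closure (orbitSet G y) = closure (orbitSet G x) := closure_orbitSet_eq H hy
      have hsub : orbitSet G y ⊆ closure (orbitSet G x) := orbitSet_subset_closure hy
      have horb : {z | ∃ g ∈ (G : Set (X ≃ₜ X)), g y = z} = orbitSet G y := by
        ext z; simp [orbitSet]
      rw [horb, Set.inter_eq_self_of_subset_left hsub, hW]
  · rintro ⟨𝒲, hclopen, -, hunion, hmin⟩
    intro x _
    have hx : x ∈ ⋃₀ 𝒲 := by rw [hunion]; trivial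
    obtain ⟨W, hW, hxW⟩ := hx
    exact ⟨W, Set.subset_univ W, (hclopen W hW).2, hxW, (hmin W hW).2⟩
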